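/- Let F_q be a finite field, let α_1,…,α_r be distinct elements of F_q, let V = (v_{i,j}) be an s×r matrix with all entries in F_q nonzero, and let f ∈ F_q[X] be a nonzero polynomial. Then for every j with 1 ≤ j ≤ r, the NRT weight of the j-th column of the matrix EV_{A,V}(f) (whose (i,j) entry is v_{i,j}·∂^(i−1)f(α_j)) equals s − min(s, ν_f(α_j)); in particular it equals s − ν_f(α_j) whenever ν_f(α_j) ≤ s. -/

import Mathlib

open Polynomial

/-- The NRT weight of a column vector of height `s`: it is `0` for the zero column, and
`s - i + 1` (1-based) when the topmost nonzero entry is in row `i`; with 0-based indexing this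
is the maximum of `s - i` over indices `i` with a nonzero entry. -/
def nrtColWt {F : Type*} [Zero F] [DecidableEq F] {s : ℕ} (col : Fin s → F) : ℕ :=
  (Finset.univ.filter fun i => col i ≠ 0).sup fun i => s - i.val

/-- The NRT weight of an `s × r` matrix: the sum of the NRT weights of its columns. -/
def nrtWt {F : Type*} [Zero F] [DecidableEq F] {s r : ℕ}
    (A : Matrix (Fin s) (Fin r) F) : ℕ :=
  ∑ j, nrtColWt fun i => A i j

/-- The evaluation map of hyperderivative Reed–Solomon codes: the `(i, j)` entry of
`EVmat α V f` is `V i j * ∂^(i) f (α j)` (0-based hyperderivative order). -/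
noncomputable def EVmat {F : Type*} [Semiring F] {s r : ℕ} (α : Fin r → F)
    (V : Matrix (Fin s) (Fin r) F) (f : Polynomial F) : Matrix (Fin s) (Fin r) F :=
  Matrix.of fun i j => V i j * (Polynomial.hasseDeriv i.val f).eval (α j)

/-- For distinct evaluation points, a multiplier matrix with nonzero entries
and a nonzero polynomial `f`, the NRT weight of the `j`-th column of `EVmat α V f` equals
`s - min s (ν_f (α j))`; in particular it equals `s - ν_f (α j)` when `ν_f (α j) ≤ s`. -/
theorem nrtColWt_EVmat {F : Type*} [Field F] [Fintype F] [DecidableEq F] {s r : ℕ}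
    (α : Fin r → F) (hα : Function.Injective α)
    (V : Matrix (Fin s) (Fin r) F) (hV : ∀ i j, V i j ≠ 0)
    (f : Polynomial F) (hf : f ≠ 0) :
    ∀ j : Fin r,
      (nrtColWt fun i => EVmat α V f i j) = s - min s (rootMultiplicity (α j) f) ∧
      (rootMultiplicity (α j) f ≤ s →
        (nrtColWt fun i => EVmat α V f i j) = s - rootMultiplicity (α j) f) := by
  intro j
  have key : (nrtColWt fun i => EVmat α V f i j) = s - min s (rootMultiplicity (α j) f) := by
    set g := taylor (α j) f with hg
    have hg0 : g ≠ 0 := fun h => hf (taylor_injective (α j) (by simpa [hg] using h))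
    have hm : rootMultiplicity (α j) f = g.natTrailingDegree := by
      rw [rootMultiplicity_eq_natTrailingDegree, hg, taylor_apply]
    set m := g.natTrailingDegree with hmdef
    have hentry : ∀ i : Fin s, (EVmat α V f i j ≠ 0) ↔ g.coeff i.val ≠ 0 := by
      intro i
      simp only [EVmat, Matrix.of_apply, mul_ne_zero_iff, hg, taylor_coeff]
      exact ⟨fun h => h.2, fun h => ⟨hV i j, h⟩⟩
    rw [hm, nrtColWt]
    rcases lt_or_ge m s with hms | hms
    · rw [min_eq_right hms.le]
      apply le_antisymm
      · apply Finset.sup_le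
        intro i hi
        rw [Finset.mem_filter] at hi
        have : m ≤ i.val := by
          by_contra hc
          exact (hentry i).mp hi.2 (coeff_eq_zero_of_lt_natTrailingDegree (lt_of_not_ge hc))
        omega
      · have hmem : (⟨m, hms⟩ : Fin s) ∈ Finset.univ.filter
            fun i => (fun i => EVmat α V f i j) i ≠ 0 := by
          rw [Finset.mem_filter]
          exact ⟨Finset.mem_univ _, (hentry ⟨m, hms⟩).mpr
            (coeff_natTrailingDegree_ne_zero.mpr hg0)⟩
        exact Finset.le_sup (f := fun i : Fin s => s - i.val) hmem
    · rw [min_eq_left hms, Nat.sub_self]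
      have : (Finset.univ.filter fun i => (fun i => EVmat α V f i j) i ≠ 0) = ∅ := by
        rw [Finset.filter_eq_empty_iff]
        intro i _
        simp only [ne_eq, not_not]
        by_contra hc
        have := (hentry i).mp hc
        exact this (coeff_eq_zero_of_lt_natTrailingDegree (lt_of_lt_of_le i.isLt hms))
      rw [this]
      simp
  exact ⟨key, fun h => by rw [key, min_eq_right h]⟩
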